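/- Let λ₁,…,λₙ be real numbers and η₁,…,ηₙ i.i.d. standard real Gaussian random variables. Set σ = √(Σᵢ λᵢ²) > 0 and δ = max{max_i λᵢ, 0}. Then for every α > 0, Prob{ Σᵢ λᵢηᵢ² − Σᵢ λᵢ ≥ α·σ } ≤ exp( − min{α, σ/δ}·α/8 ) (with σ/δ interpreted as +∞ when δ = 0). -/

import Mathlib

open MeasureTheory ProbabilityTheory Real


lemma aux_neg_log_one_sub_le {t : ℝ} (ht : t ≤ 1/2) : -Real.log (1 - t) ≤ t + t^2 := by
  rcases le_or_gt t 0 with h0 | h0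
  · have h1 : (0:ℝ) < 1 - t := by linarith
    have h2 : (0:ℝ) < 1 + t + t^2 := by nlinarith [sq_nonneg (1 + t)]
    have h3 : (1 - t)⁻¹ ≤ 1 + t + t^2 := by
      rw [inv_le_iff_one_le_mul₀ h1]
      nlinarith
    calc -Real.log (1-t) = Real.log (1-t)⁻¹ := (Real.log_inv _).symm
      _ ≤ Real.log (1+t+t^2) := Real.log_le_log (by positivity) h3
      _ ≤ (1+t+t^2) - 1 := Real.log_le_sub_one_of_pos h2
      _ = t + t^2 := by ring
  · have habs : |t| < 1 := by rw [abs_of_pos h0]; linarith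
    have h := Real.abs_log_sub_add_sum_range_le habs 5
    rw [abs_of_pos h0] at h
    have hsum : (∑ i ∈ Finset.range 5, t ^ (i + 1) / (i + 1)) =
        t + t^2/2 + t^3/3 + t^4/4 + t^5/5 := by
      simp [Finset.sum_range_succ]
      ring
    rw [hsum] at h
    have h1t : (0:ℝ) < 1 - t := by linarith
    have htail : t ^ 6 / (1 - t) ≤ 2 * t^6 := by
      rw [div_le_iff₀ h1t]
      nlinarith [mul_le_mul_of_nonneg_left ht (le_of_lt (pow_pos h0 6))]
    have habs' := (abs_le.mp h).1
    nlinarith [pow_pos h0 3, pow_pos h0 4, pow_pos h0 5, pow_pos h0 6,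
      mul_le_mul_of_nonneg_left ht (le_of_lt (pow_pos h0 2)),
      mul_le_mul_of_nonneg_left ht (le_of_lt (pow_pos h0 3)),
      mul_le_mul_of_nonneg_left ht (le_of_lt (pow_pos h0 4))]


lemma aux_gaussian_withDensity :
    gaussianReal 0 1 = MeasureTheory.Measure.withDensity volume
      (fun x => ((Real.toNNReal (gaussianPDFReal 0 1 x)) : ENNReal)) := by
  rw [gaussianReal_of_var_ne_zero 0 one_ne_zero]
  rfl

lemma aux_pdf_eq (s x : ℝ) :
    gaussianPDFReal 0 1 x * Real.exp (s * x^2)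
      = (Real.sqrt (2 * π))⁻¹ * Real.exp (-(1/2 - s) * x^2) := by
  rw [gaussianPDFReal]
  push_cast
  rw [mul_one, mul_assoc, ← Real.exp_add]
  ring_nf

lemma aux_integrable_exp_sq_gaussian {s : ℝ} (hs : 2*s < 1) :
    Integrable (fun x => Real.exp (s * x^2)) (gaussianReal 0 1) := by
  rw [aux_gaussian_withDensity,
    integrable_withDensity_iff_integrable_smul ((measurable_gaussianPDFReal 0 1).real_toNNReal)]
  have : (fun x => (Real.toNNReal (gaussianPDFReal 0 1 x)) • Real.exp (s * x^2))
      = fun x => (Real.sqrt (2 * π))⁻¹ * Real.exp (-(1/2 - s) * x^2) := by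
    funext x
    rw [NNReal.smul_def, smul_eq_mul, Real.coe_toNNReal _ (gaussianPDFReal_nonneg 0 1 x),
      aux_pdf_eq]
  rw [this]
  exact (integrable_exp_neg_mul_sq (by linarith)).const_mul _

lemma aux_integral_exp_sq_gaussian {s : ℝ} (hs : 2*s < 1) :
    ∫ x, Real.exp (s * x^2) ∂(gaussianReal 0 1) = (Real.sqrt (1 - 2*s))⁻¹ := by
  rw [aux_gaussian_withDensity,
    integral_withDensity_eq_integral_smul ((measurable_gaussianPDFReal 0 1).real_toNNReal)]
  have h1 : (fun x => (Real.toNNReal (gaussianPDFReal 0 1 x)) • Real.exp (s * x^2))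
      = fun x => (Real.sqrt (2 * π))⁻¹ * Real.exp (-(1/2 - s) * x^2) := by
    funext x
    rw [NNReal.smul_def, smul_eq_mul, Real.coe_toNNReal _ (gaussianPDFReal_nonneg 0 1 x),
      aux_pdf_eq]
  rw [h1, integral_const_mul, integral_gaussian]
  have hb : (0:ℝ) < 1/2 - s := by linarith
  have hπ : (0:ℝ) < 2 * π := by positivity
  rw [inv_mul_eq_div, ← Real.sqrt_div (by positivity)]
  rw [show π / (1/2 - s) / (2 * π) = (1 - 2*s)⁻¹ by
    have hπ' : π ≠ 0 := Real.pi_ne_zero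
    have h2 : (1:ℝ) - 2*s ≠ 0 := by linarith
    field_simp]
  rw [Real.sqrt_inv]

lemma aux_mgf_bound {s : ℝ} (hs : s ≤ 1/4) :
    Real.exp (-s) * (Real.sqrt (1 - 2*s))⁻¹ ≤ Real.exp (2*s^2) := by
  have hpos : (0:ℝ) < 1 - 2*s := by linarith
  have hlog : -Real.log (1 - 2*s) ≤ 2*s + (2*s)^2 := aux_neg_log_one_sub_le (by linarith)
  have h1 : (Real.sqrt (1 - 2*s))⁻¹ = Real.exp (-(Real.log (1-2*s)/2)) := by
    rw [← Real.log_sqrt hpos.le, Real.exp_neg, Real.exp_log (Real.sqrt_pos.mpr hpos)]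
  rw [h1, ← Real.exp_add, Real.exp_le_exp]
  nlinarith

lemma aux_exp_sq_integral {Ω : Type*} [MeasureSpace Ω] {X : Ω → ℝ} (hX : Measurable X)
    (hlaw : Measure.map X volume = gaussianReal 0 1) {s : ℝ} (hs : 2*s < 1) :
    (∫ ω, Real.exp (s * (X ω)^2)) = (Real.sqrt (1 - 2*s))⁻¹ ∧
    Integrable (fun ω => Real.exp (s * (X ω)^2)) volume := by
  have hg : AEStronglyMeasurable (fun x : ℝ => Real.exp (s * x^2))
      (Measure.map X volume) := Measurable.aestronglyMeasurable (by measurability)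
  constructor
  · rw [← aux_integral_exp_sq_gaussian hs, ← hlaw, integral_map hX.aemeasurable hg]
  · have h2 := aux_integrable_exp_sq_gaussian hs
    rw [← hlaw, integrable_map_measure hg hX.aemeasurable] at h2
    exact h2

theorem stmt_13 {Ω : Type*} [MeasureSpace Ω] [IsProbabilityMeasure (volume : Measure Ω)]
    (n : ℕ) (lam : Fin n → ℝ)
    (η : Fin n → Ω → ℝ) (hmeas : ∀ i, Measurable (η i))
    (hindep : iIndepFun η (volume : Measure Ω))
    (hlaw : ∀ i, Measure.map (η i) (volume : Measure Ω) = gaussianReal 0 1)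
    (σ δ : ℝ) (hσ : σ = Real.sqrt (∑ i, (lam i) ^ 2)) (hσpos : 0 < σ)
    (hδ : δ = max (⨆ i, lam i) 0)
    (α : ℝ) (hα : 0 < α) :
    ((volume : Measure Ω)
        {ω | α * σ ≤ (∑ i, lam i * (η i ω) ^ 2) - ∑ i, lam i}).toReal ≤
      if δ = 0 then Real.exp (-(α * α / 8))
      else Real.exp (-(min α (σ / δ) * α / 8)) := by
  have hn : n ≠ 0 := by
    rintro rfl
    rw [hσ] at hσpos
    simp at hσpos
  haveI : Nonempty (Fin n) := Fin.pos_iff_nonempty.mp (Nat.pos_of_ne_zero hn)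
  have hδ0 : 0 ≤ δ := hδ ▸ le_max_right _ _
  have hlam_le : ∀ i, lam i ≤ δ := fun i =>
    (le_ciSup (Set.Finite.bddAbove (Set.finite_range lam)) i).trans (hδ ▸ le_max_left _ _)
  set β : ℝ := if δ = 0 then α/(4*σ) else min (α/(4*σ)) (1/(4*δ)) with hβ
  have hβpos : 0 < β := by
    rw [hβ]; split_ifs with h
    · positivity
    · have hδpos : 0 < δ := lt_of_le_of_ne hδ0 (Ne.symm h)
      exact lt_min (by positivity) (by positivity)
  have hβσ : β ≤ α/(4*σ) := by
    rw [hβ]; split_ifs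
    · exact le_refl _
    · exact min_le_left _ _
  have hβlam : ∀ i, β * lam i ≤ 1/4 := by
    intro i
    rcases le_or_gt (lam i) 0 with h | h
    · nlinarith
    · have hδpos : 0 < δ := lt_of_lt_of_le h (hlam_le i)
      have hβδ : β ≤ 1/(4*δ) := by
        rw [hβ, if_neg hδpos.ne']; exact min_le_right _ _
      calc β * lam i ≤ (1/(4*δ)) * δ :=
            mul_le_mul hβδ (hlam_le i) h.le (by positivity)
        _ = 1/4 := by field_simp
  set X : Fin n → Ω → ℝ := fun i ω => lam i * (η i ω)^2 - lam i with hXdef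
  have hXmeas : ∀ i, Measurable (X i) := fun i =>
    (((hmeas i).pow_const 2).const_mul _).sub_const _
  have hXindep : iIndepFun X (volume : Measure Ω) := by
    have h : X = fun i => (fun x : ℝ => lam i * x^2 - lam i) ∘ η i := rfl
    rw [h]
    exact hindep.comp _ (fun i => ((measurable_id.pow_const 2).const_mul (lam i)).sub_const (lam i))
  have hs_lt : ∀ i, 2*(β * lam i) < 1 := fun i => by linarith [hβlam i]
  have hint : ∀ i, Integrable (fun ω => Real.exp (β * X i ω)) volume := by
    intro i
    have h2 := (aux_exp_sq_integral (hmeas i) (hlaw i) (hs_lt i)).2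
    have h3 : (fun ω => Real.exp (β * X i ω))
        = fun ω => Real.exp (-(β * lam i)) * Real.exp ((β * lam i) * (η i ω)^2) := by
      funext ω
      rw [← Real.exp_add]
      simp only [hXdef]
      ring_nf
    rw [h3]
    exact h2.const_mul _
  have hmgf : ∀ i, mgf (X i) volume β ≤ Real.exp (2 * (β*lam i)^2) := by
    intro i
    have h1 := (aux_exp_sq_integral (hmeas i) (hlaw i) (hs_lt i)).1
    have heq : (fun ω => Real.exp (β * X i ω))
        = fun ω => Real.exp (-(β * lam i)) * Real.exp ((β * lam i) * (η i ω)^2) := by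
      funext ω
      rw [← Real.exp_add]
      simp only [hXdef]
      ring_nf
    have h2 : mgf (X i) volume β
        = Real.exp (-(β*lam i)) * (Real.sqrt (1 - 2*(β*lam i)))⁻¹ := by
      rw [← h1]
      show (∫ ω, Real.exp (β * X i ω)) = _
      rw [heq, integral_const_mul]
    rw [h2]
    exact aux_mgf_bound (hβlam i)
  have hS : Integrable (fun ω => Real.exp (β * (∑ i, X i) ω)) volume :=
    hXindep.integrable_exp_mul_sum hXmeas (fun i _ => hint i)
  have hset : {ω : Ω | α * σ ≤ (∑ i, lam i * (η i ω) ^ 2) - ∑ i, lam i}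
      = {ω : Ω | α * σ ≤ (∑ i, X i) ω} := by
    ext ω
    simp only [Set.mem_setOf_eq, Finset.sum_apply, hXdef, Finset.sum_sub_distrib]
  rw [hset]
  have hσ2 : σ^2 = ∑ i, lam i ^2 := by
    rw [hσ, Real.sq_sqrt (Finset.sum_nonneg fun i _ => sq_nonneg _)]
  have hcher := measure_ge_le_exp_mul_mgf (μ := (volume : Measure Ω))
    (X := ∑ i, X i) (α*σ) hβpos.le hS
  refine hcher.trans ?_
  rw [hXindep.mgf_sum hXmeas]
  have hprod : ∏ i, mgf (X i) volume β ≤ Real.exp (2 * β^2 * σ^2) := by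
    calc ∏ i, mgf (X i) volume β ≤ ∏ i, Real.exp (2*(β*lam i)^2) :=
          Finset.prod_le_prod (fun i _ => mgf_nonneg) (fun i _ => hmgf i)
      _ = Real.exp (∑ i, 2*(β*lam i)^2) := by rw [Real.exp_sum]
      _ = Real.exp (2 * β^2 * σ^2) := by
          rw [hσ2, Finset.mul_sum]
          congr 1
          exact Finset.sum_congr rfl (fun i _ => by ring)
  calc Real.exp (-β * (α*σ)) * ∏ i, mgf (X i) volume β
      ≤ Real.exp (-β * (α*σ)) * Real.exp (2 * β^2 * σ^2) :=
        mul_le_mul_of_nonneg_left hprod (Real.exp_pos _).le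
    _ = Real.exp (2 * β^2 * σ^2 - β * (α*σ)) := by rw [← Real.exp_add]; ring_nf
    _ ≤ Real.exp (-(β * (α*σ) / 2)) := by
        rw [Real.exp_le_exp]
        have hβσ' : β * (4*σ) ≤ α := by
          rwa [le_div_iff₀ (by positivity)] at hβσ
        have h4 : 2 * β^2 * σ^2 ≤ β * (α*σ) / 2 := by
          nlinarith [mul_le_mul_of_nonneg_left hβσ' (by positivity : (0:ℝ) ≤ β*σ/2)]
        linarith
    _ ≤ _ := by
        split_ifs with h
        · rw [Real.exp_le_exp, hβ, if_pos h]
          have h5 : α / (4*σ) * (α*σ) / 2 = α * α / 8 := by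
            field_simp; ring
          rw [h5]
        · rw [Real.exp_le_exp]
          have hδpos : 0 < δ := lt_of_le_of_ne hδ0 (Ne.symm h)
          rw [hβ, if_neg h]
          have h6 : min (α/(4*σ)) (1/(4*δ)) * (α*σ) / 2 = min α (σ/δ) * α / 8 := by
            rcases le_total (α/(4*σ)) (1/(4*δ)) with hle | hle
            · have hle' : α ≤ σ/δ := by
                rw [div_le_div_iff₀ (by positivity) (by positivity)] at hle
                rw [le_div_iff₀ hδpos]
                nlinarith
              rw [min_eq_left hle, min_eq_left hle']
              field_simp
              ring
            · have hle' : σ/δ ≤ α := by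
                rw [div_le_div_iff₀ (by positivity) (by positivity)] at hle
                rw [div_le_iff₀ hδpos]
                nlinarith
              rw [min_eq_right hle, min_eq_right hle']
              field_simp
              ring
          rw [h6]
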